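/- If t is an integer with t ≡ 1 (mod 2^{2k+1}) for a positive integer k, then t is a 2^k-th power in ℚ_2. -/

import Mathlib

/-- If `t ≡ 1 (mod 2^(2k+1))` for a positive integer `k`, then `t` is a `2^k`-th power
in `ℚ_2`. -/
theorem stmt_4 (k : ℕ) (hk : 0 < k) (t : ℤ) (ht : t ≡ 1 [ZMOD (2 ^ (2 * k + 1) : ℤ)]) :
    ∃ x : ℚ_[2], x ^ 2 ^ k = (t : ℚ_[2]) := by
  have h2 : ((2 : ℤ) ^ (2 * k + 1)) ∣ (1 - t) := ht.dvd
  set F : Polynomial ℤ_[2] :=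
    Polynomial.X ^ (2 ^ k) - Polynomial.C ((t : ℤ) : ℤ_[2]) with hF
  have heval : F.eval 1 = ((1 - t : ℤ) : ℤ_[2]) := by
    simp [hF]
  have hder : F.derivative.eval 1 = ((2 : ℤ_[2]) ^ k) := by
    simp [hF, Polynomial.derivative_X_pow]
  have hnorm : ‖F.eval 1‖ < ‖F.derivative.eval 1‖ ^ 2 := by
    rw [heval, hder]
    have h1 : ‖((1 - t : ℤ) : ℤ_[2])‖ ≤ (2 : ℝ) ^ (-(2 * k + 1 : ℕ) : ℤ) := by
      exact_mod_cast PadicInt.norm_int_le_pow_iff_dvd.2 h2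
    have h3 : ‖(2 : ℤ_[2]) ^ k‖ = (2 : ℝ) ^ (-(k : ℤ)) := by
      simpa using (PadicInt.norm_p_pow (p := 2) k)
    rw [h3, ← zpow_natCast ((2:ℝ) ^ (-(k:ℤ))) 2, ← zpow_mul]
    refine lt_of_le_of_lt h1 ?_
    apply zpow_lt_zpow_right₀ (by norm_num)
    push_cast
    omega
  obtain ⟨z, hz, -, -, -⟩ := hensels_lemma hnorm
  have hz' : z ^ 2 ^ k = ((t : ℤ) : ℤ_[2]) := by
    have := hz
    simp [hF, sub_eq_zero] at this
    exact this
  refine ⟨(z : ℚ_[2]), ?_⟩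
  exact_mod_cast congrArg (fun y : ℤ_[2] => (y : ℚ_[2])) hz'
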